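/- Let ℓ be a positive natural number and A ⊆ (Fin ℓ → ℝ) a nonempty, convex, downward closed set such that for every coordinate i, the set {p i | p ∈ A} ⊆ ℝ is bounded above. Define the Pareto front Pareto(A) = {p ∈ closure A | ∀ p' ∈ closure A, p ≤ p' → p' = p}. Then the downward convex hull of the Pareto front equals the closure of A: {q : Fin ℓ → ℝ | ∃ p ∈ convexHull ℝ (Pareto(A)), q ≤ p} = closure A. -/

import Mathlib

open Set

theorem downset_pareto_eq_closure (ℓ : ℕ) (hℓ : 0 < ℓ) (A : Set (Fin ℓ → ℝ))
    (hne : A.Nonempty) (hconv : Convex ℝ A)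
    (hdown : ∀ p ∈ A, ∀ q : Fin ℓ → ℝ, q ≤ p → q ∈ A)
    (hbdd : ∀ i : Fin ℓ, BddAbove {x : ℝ | ∃ p ∈ A, x = p i}) :
    {q : Fin ℓ → ℝ |
        ∃ p ∈ convexHull ℝ {p ∈ closure A | ∀ p' ∈ closure A, p ≤ p' → p' = p},
          q ≤ p} = closure A := by
  classical
  set C := closure A with hC
  -- coordinates of C are bounded above
  have hCb : ∀ i, BddAbove ((fun p : Fin ℓ → ℝ => p i) '' C) := by
    intro i
    obtain ⟨b, hb⟩ := hbdd i
    refine ⟨b, ?_⟩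
    rintro x ⟨p, hp, rfl⟩
    have hsub : C ⊆ {p : Fin ℓ → ℝ | p i ≤ b} := by
      apply closure_minimal
      · intro p hp; exact hb ⟨p, hp, rfl⟩
      · exact isClosed_le (continuous_apply i) continuous_const
    exact hsub hp
  -- C is downward closed
  have hCdown : ∀ p ∈ C, ∀ q : Fin ℓ → ℝ, q ≤ p → q ∈ C := by
    intro p hp q hqp
    have himg : (fun x : Fin ℓ → ℝ => x + (q - p)) '' A ⊆ A := by
      rintro _ ⟨x, hx, rfl⟩
      refine hdown x hx _ (fun i => ?_)
      have := hqp i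
      simp only [Pi.add_apply, Pi.sub_apply]
      linarith
    have hc : Continuous (fun x : Fin ℓ → ℝ => x + (q - p)) :=
      continuous_id.add continuous_const
    have h1 : (fun x : Fin ℓ → ℝ => x + (q - p)) '' C
        ⊆ closure ((fun x : Fin ℓ → ℝ => x + (q - p)) '' A) :=
      image_closure_subset_closure_image hc
    have h2 : closure ((fun x : Fin ℓ → ℝ => x + (q - p)) '' A) ⊆ C :=
      closure_mono himg
    have hq' : q ∈ (fun x : Fin ℓ → ℝ => x + (q - p)) '' C :=
      ⟨p, hp, by ring⟩
    exact h2 (h1 hq')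
  -- every point of C is dominated by a maximal point of C
  have hmax : ∀ q ∈ C, ∃ m, q ≤ m ∧ Maximal (· ∈ C) m := by
    intro q hq
    refine zorn_le_nonempty₀ C ?_ q hq
    intro c hcC hchain y hy
    have hbddc : ∀ i, BddAbove ((fun p : Fin ℓ → ℝ => p i) '' c) :=
      fun i => (hCb i).mono (image_mono hcC)
    have hnec : ∀ i, ((fun p : Fin ℓ → ℝ => p i) '' c).Nonempty :=
      fun i => ⟨y i, y, hy, rfl⟩
    set m : Fin ℓ → ℝ := fun i => sSup ((fun p : Fin ℓ → ℝ => p i) '' c) with hm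
    have hym : ∀ p ∈ c, p ≤ m := fun p hp i => le_csSup (hbddc i) ⟨p, hp, rfl⟩
    refine ⟨m, ?_, hym⟩
    -- m ∈ closure c ⊆ C
    have hmc : m ∈ closure c := by
      rw [Metric.mem_closure_iff]
      intro ε hε
      have h1 : ∀ i : Fin ℓ, ∃ p ∈ c, m i - ε / 2 < p i := by
        intro i
        have hlt : m i - ε / 2 < sSup ((fun p : Fin ℓ → ℝ => p i) '' c) :=
          sub_lt_self (m i) (half_pos hε)
        obtain ⟨x, ⟨p, hp, rfl⟩, hx⟩ := exists_lt_of_lt_csSup (hnec i) hlt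
        exact ⟨p, hp, hx⟩
      choose f hf1 hf2 using h1
      -- get an upper bound in c of the finitely many f i
      have hdir : Directed (· ≤ ·) (fun x : c => (x : Fin ℓ → ℝ)) :=
        directedOn_iff_directed.mp hchain.directedOn
      have : Nonempty c := ⟨⟨y, hy⟩⟩
      obtain ⟨z, hz⟩ := hdir.finset_le
        (Finset.image (fun i : Fin ℓ => (⟨f i, hf1 i⟩ : c)) Finset.univ)
      refine ⟨z, z.2, ?_⟩
      rw [dist_pi_lt_iff hε]
      intro i
      have hfz : f i ≤ (z : Fin ℓ → ℝ) :=
        hz ⟨f i, hf1 i⟩ (Finset.mem_image_of_mem _ (Finset.mem_univ i))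
      have h1 : m i - ε / 2 < (z : Fin ℓ → ℝ) i := lt_of_lt_of_le (hf2 i) (hfz i)
      have h2 : (z : Fin ℓ → ℝ) i ≤ m i := hym z z.2 i
      rw [Real.dist_eq, abs_sub_lt_iff]
      constructor <;> linarith
    have : closure (c : Set (Fin ℓ → ℝ)) ⊆ C := by
      rw [hC, ← closure_closure (s := A)]
      exact closure_mono hcC
    exact this hmc
  ext q
  simp only [mem_setOf_eq]
  constructor
  · rintro ⟨p, hp, hqp⟩
    have hPC : {p ∈ C | ∀ p' ∈ C, p ≤ p' → p' = p} ⊆ C := fun x hx => hx.1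
    have hCc : Convex ℝ C := hconv.closure
    have hpC : p ∈ C := convexHull_min hPC hCc hp
    exact hCdown p hpC q hqp
  · intro hq
    obtain ⟨m, hqm, hmC, hmmax⟩ := hmax q hq
    refine ⟨m, subset_convexHull ℝ _ ?_, hqm⟩
    exact ⟨hmC, fun p' hp' hmp' => le_antisymm (hmmax hp' hmp') hmp'⟩
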